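/- Let G be a finite group acting 3-transitively on a finite set X and 2-transitively on a finite set Y, with point stabilizers G₁, G₂ of two distinct points of X and H₁, H₂ of two distinct points of Y. If G₁ ∩ G₂ = H₁ ∩ H₂, then the actions of G on X and Y are isomorphic. -/

import Mathlib

open MulAction Subgroup

private theorem nat_eq_of_pred_mul_self {m n : ℕ} (hm : 2 ≤ m) (hn : 2 ≤ n)
    (h : (m - 1) * m = (n - 1) * n) : m = n := by
  rcases lt_trichotomy m n with hlt | he | hlt
  · exfalso
    have h1 : (m - 1) * m < (n - 1) * n :=
      Nat.mul_lt_mul_of_lt_of_lt (by omega) hlt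
    omega
  · exact he
  · exfalso
    have h1 : (n - 1) * n < (m - 1) * m :=
      Nat.mul_lt_mul_of_lt_of_lt (by omega) hlt
    omega

private theorem ncard_compl_singleton' {Z : Type*} [Fintype Z] (z : Z) :
    (({z}ᶜ : Set Z)).ncard = Nat.card Z - 1 := by
  have := Set.ncard_add_ncard_compl ({z} : Set Z)
  rw [Set.ncard_singleton] at this
  omega

private theorem exists_equiv_of_stabilizer_eq' {G X Y : Type*} [Group G] [MulAction G X] [MulAction G Y]
    (x₀ : X) (y₀ : Y)
    (hTX : ∀ x : X, ∃ g : G, g • x₀ = x)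
    (hTY : ∀ y : Y, ∃ g : G, g • y₀ = y)
    (hst : stabilizer G x₀ = stabilizer G y₀) :
    ∃ e : X ≃ Y, ∀ (g : G) (x : X), e (g • x) = g • e x := by
  classical
  choose σ hσ using hTX
  have key : ∀ (g : G) (x : X), g • x₀ = x → g • y₀ = σ x • y₀ := by
    intro g x hg
    have h1 : (σ x)⁻¹ * g ∈ stabilizer G x₀ := by
      rw [mem_stabilizer_iff, mul_smul, hg, inv_smul_eq_iff, hσ]
    rw [hst, mem_stabilizer_iff, mul_smul, inv_smul_eq_iff] at h1
    exact h1
  have hinj : Function.Injective (fun x : X => σ x • y₀) := by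
    intro a b hab
    simp only at hab
    have h2 : (σ b)⁻¹ * σ a ∈ stabilizer G y₀ := by
      rw [mem_stabilizer_iff, mul_smul, hab, inv_smul_eq_iff]
    rw [← hst, mem_stabilizer_iff, mul_smul, inv_smul_eq_iff] at h2
    rw [← hσ a, ← hσ b, h2]
  have hsurj : Function.Surjective (fun x : X => σ x • y₀) := by
    intro y
    obtain ⟨g, hg⟩ := hTY y
    exact ⟨g • x₀, (key g (g • x₀) rfl).symm.trans hg⟩
  refine ⟨Equiv.ofBijective _ ⟨hinj, hsurj⟩, fun g x => ?_⟩
  show σ (g • x) • y₀ = g • σ x • y₀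
  have h3 := key (g * σ x) (g • x) (by rw [mul_smul, hσ])
  rw [← h3, mul_smul]

theorem actions_isomorphic_of_two_point_stabilizers_eq
    (G X Y : Type*) [Group G] [Finite G] [Fintype X] [Fintype Y]
    [MulAction G X] [MulAction G Y] [FaithfulSMul G X] [FaithfulSMul G Y]
    (h3t : ∀ x₁ x₂ x₃ y₁ y₂ y₃ : X, x₁ ≠ x₂ → x₁ ≠ x₃ → x₂ ≠ x₃ →
      y₁ ≠ y₂ → y₁ ≠ y₃ → y₂ ≠ y₃ →
      ∃ g : G, g • x₁ = y₁ ∧ g • x₂ = y₂ ∧ g • x₃ = y₃)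
    (h2t : ∀ y₁ y₂ z₁ z₂ : Y, y₁ ≠ y₂ → z₁ ≠ z₂ →
      ∃ g : G, g • y₁ = z₁ ∧ g • y₂ = z₂)
    (x₁ x₂ : X) (hx : x₁ ≠ x₂) (y₁ y₂ : Y) (hy : y₁ ≠ y₂)
    (hstab : MulAction.stabilizer G x₁ ⊓ MulAction.stabilizer G x₂
      = MulAction.stabilizer G y₁ ⊓ MulAction.stabilizer G y₂) :
    ∃ e : X ≃ Y, ∀ (g : G) (x : X), e (g • x) = g • e x := by
  classical
  haveI : Nontrivial X := ⟨⟨x₁, x₂, hx⟩⟩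
  haveI : Nontrivial Y := ⟨⟨y₁, y₂, hy⟩⟩
  have hnY2 : 2 ≤ Nat.card Y := Finite.one_lt_card
  have hnX2 : 2 ≤ Nat.card X := Finite.one_lt_card
  -- transitivity on Y
  have hTY : ∀ y z : Y, ∃ g : G, g • y = z := by
    intro y z
    have hw : ∃ w : Y, w ≠ y := by
      rcases eq_or_ne y y₁ with rfl | h
      · exact ⟨y₂, Ne.symm hy⟩
      · exact ⟨y₁, Ne.symm h⟩
    have hw' : ∃ w' : Y, w' ≠ z := by
      rcases eq_or_ne z y₁ with rfl | h
      · exact ⟨y₂, Ne.symm hy⟩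
      · exact ⟨y₁, Ne.symm h⟩
    obtain ⟨w, hwy⟩ := hw
    obtain ⟨w', hwz⟩ := hw'
    obtain ⟨g, hg, -⟩ := h2t y w z w' (Ne.symm hwy) (Ne.symm hwz)
    exact ⟨g, hg⟩
  haveI instY : IsPretransitive G Y := ⟨hTY⟩
  have hGpos : 0 < Nat.card G := Nat.card_pos
  by_cases hX3 : 3 ≤ Nat.card X
  · -- main case
    have hthird : ∀ u v : X, ∃ w, w ≠ u ∧ w ≠ v := by
      intro u v
      by_contra hcon
      push_neg at hcon
      have hsub : (Finset.univ : Finset X) ⊆ {u, v} := by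
        intro w _
        rcases eq_or_ne w u with rfl | h
        · simp
        · simp [hcon w h]
      have h1 := Finset.card_le_card hsub
      have h2 : ({u, v} : Finset X).card ≤ 2 :=
        (Finset.card_insert_le _ _).trans (by simp)
      rw [Finset.card_univ] at h1
      rw [Nat.card_eq_fintype_card] at hX3
      omega
    have hTX : ∀ x x' : X, ∃ g : G, g • x = x' := by
      intro x x'
      obtain ⟨a, ha, -⟩ := hthird x x
      obtain ⟨b, hb1, hb2⟩ := hthird x a
      obtain ⟨a', ha', -⟩ := hthird x' x'
      obtain ⟨b', hb1', hb2'⟩ := hthird x' a'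
      obtain ⟨g, hg, -, -⟩ := h3t x a b x' a' b' (Ne.symm ha) (Ne.symm hb1) (Ne.symm hb2)
        (Ne.symm ha') (Ne.symm hb1') (Ne.symm hb2')
      exact ⟨g, hg⟩
    haveI instX : IsPretransitive G X := ⟨hTX⟩
    set G₁ := stabilizer G x₁ with hG₁def
    set K := stabilizer G x₁ ⊓ stabilizer G x₂ with hKdef
    have hKG₁ : K ≤ G₁ := inf_le_left
    have hKY : K ≤ stabilizer G y₁ := hstab.le.trans inf_le_left
    -- orbit of x₂ under G₁ is the complement of x₁
    have horbX : orbit G₁ x₂ = ({x₁}ᶜ : Set X) := by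
      ext x
      simp only [Set.mem_compl_iff, Set.mem_singleton_iff]
      constructor
      · rintro ⟨⟨g, hg⟩, rfl⟩
        simp only [Subgroup.mk_smul]
        intro hcon
        rw [mem_stabilizer_iff] at hg
        rw [← hg] at hcon
        exact hx (smul_left_cancel g hcon).symm
      · intro hne
        rcases eq_or_ne x x₂ with rfl | hne2
        · exact ⟨1, one_smul _ _⟩
        · obtain ⟨b, hb1, hb2⟩ := hthird x₁ x₂
          obtain ⟨b', hb1', hb2'⟩ := hthird x₁ x
          obtain ⟨g, hg1, hg2, -⟩ := h3t x₁ x₂ b x₁ x b' hx (Ne.symm hb1) (Ne.symm hb2)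
            (Ne.symm hne) (Ne.symm hb1') (Ne.symm hb2')
          exact ⟨⟨g, mem_stabilizer_iff.mpr hg1⟩, hg2⟩
    have hstabG₁x₂ : stabilizer G₁ x₂ = K.subgroupOf G₁ := by
      ext ⟨g, hg⟩
      simp only [mem_stabilizer_iff, Subgroup.mk_smul, Subgroup.mem_subgroupOf]
      constructor
      · intro h
        rw [hKdef]
        exact Subgroup.mem_inf.mpr ⟨hg, mem_stabilizer_iff.mpr h⟩
      · intro h
        rw [hKdef] at h
        exact mem_stabilizer_iff.mp (Subgroup.mem_inf.mp h).2
    have hKrelX : K.relIndex G₁ = Nat.card X - 1 := by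
      have := index_stabilizer G₁ x₂
      rw [hstabG₁x₂, horbX, ncard_compl_singleton' x₁] at this
      exact this
    have hKindX : (Nat.card X - 1) * Nat.card X = K.index := by
      rw [← hKrelX, ← index_stabilizer_of_transitive G x₁]
      exact relIndex_mul_index hKG₁
    -- Y side
    set H₁ := stabilizer G y₁ with hH₁def
    have hKH₁ : K ≤ H₁ := hKY
    have horbY : orbit H₁ y₂ = ({y₁}ᶜ : Set Y) := by
      ext z
      simp only [Set.mem_compl_iff, Set.mem_singleton_iff]
      constructor
      · rintro ⟨⟨g, hg⟩, rfl⟩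
        simp only [Subgroup.mk_smul]
        intro hcon
        rw [mem_stabilizer_iff] at hg
        rw [← hg] at hcon
        exact hy (smul_left_cancel g hcon).symm
      · intro hne
        rcases eq_or_ne z y₂ with rfl | hne2
        · exact ⟨1, one_smul _ _⟩
        · obtain ⟨g, hg1, hg2⟩ := h2t y₁ y₂ y₁ z hy (Ne.symm hne)
          exact ⟨⟨g, mem_stabilizer_iff.mpr hg1⟩, hg2⟩
    have hstabH₁y₂ : stabilizer H₁ y₂ = K.subgroupOf H₁ := by
      ext ⟨g, hg⟩
      simp only [mem_stabilizer_iff, Subgroup.mk_smul, Subgroup.mem_subgroupOf]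
      constructor
      · intro h
        rw [hstab]
        exact Subgroup.mem_inf.mpr ⟨hg, mem_stabilizer_iff.mpr h⟩
      · intro h
        rw [hstab] at h
        exact mem_stabilizer_iff.mp (Subgroup.mem_inf.mp h).2
    have hKrelY : K.relIndex H₁ = Nat.card Y - 1 := by
      have := index_stabilizer H₁ y₂
      rw [hstabH₁y₂, horbY, ncard_compl_singleton' y₁] at this
      exact this
    have hKindY : (Nat.card Y - 1) * Nat.card Y = K.index := by
      rw [← hKrelY, ← index_stabilizer_of_transitive G y₁]
      exact relIndex_mul_index hKH₁
    have hXY : Nat.card X = Nat.card Y :=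
      nat_eq_of_pred_mul_self hnX2 hnY2 (hKindX.trans hKindY.symm)
    -- cardinality of stabilizers of points of Y versus G₁
    have hcardstab : ∀ y : Y, Nat.card (stabilizer G y) = Nat.card G₁ := by
      intro y
      have h1 := Subgroup.card_mul_index (stabilizer G y)
      have h2 := Subgroup.card_mul_index G₁
      rw [index_stabilizer_of_transitive G y] at h1
      rw [show G₁.index = Nat.card X from index_stabilizer_of_transitive G x₁] at h2
      rw [← hXY] at h1
      have hXpos : 0 < Nat.card X := by omega
      exact Nat.eq_of_mul_eq_mul_right hXpos (h1.trans h2.symm)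
    have hfinal : ∀ y : Y, G₁ ≤ stabilizer G y → ∃ e : X ≃ Y, ∀ (g : G) (x : X), e (g • x) = g • e x := by
      intro y hle
      have heq : G₁ = stabilizer G y :=
        Subgroup.eq_of_le_of_card_ge hle (hcardstab y).le
      exact exists_equiv_of_stabilizer_eq' x₁ y (fun x => hTX x₁ x) (fun z => hTY y z) heq
    -- maximality of K in G₁
    have hmax : ∀ M : Subgroup G, K ≤ M → M ≤ G₁ → M ≠ K → G₁ ≤ M := by
      intro M hKM hMG₁ hne g hg
      obtain ⟨m, hmM, hmK⟩ := SetLike.exists_of_lt (hKM.lt_of_ne (Ne.symm hne))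
      have hm1 : m • x₁ = x₁ := mem_stabilizer_iff.mp (hMG₁ hmM)
      have hm2 : m • x₂ ≠ x₂ := by
        intro hcon
        exact hmK (Subgroup.mem_inf.mpr ⟨hMG₁ hmM, mem_stabilizer_iff.mpr hcon⟩)
      have hgx₁ : g • x₁ = x₁ := mem_stabilizer_iff.mp hg
      by_cases hgx : g • x₂ = x₂
      · exact hKM (Subgroup.mem_inf.mpr ⟨hg, mem_stabilizer_iff.mpr hgx⟩)
      · have hm3 : m • x₂ ≠ x₁ := by
          intro hcon
          rw [← hm1] at hcon
          exact hx (smul_left_cancel m hcon).symm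
        have hg3 : g • x₂ ≠ x₁ := by
          intro hcon
          rw [← hgx₁] at hcon
          exact hx (smul_left_cancel g hcon).symm
        obtain ⟨h, hh1, hh2, hh3⟩ := h3t x₁ x₂ (m • x₂) x₁ x₂ (g • x₂) hx (Ne.symm hm3)
          (Ne.symm hm2) hx (Ne.symm hg3) (Ne.symm hgx)
        have hhK : h ∈ K := Subgroup.mem_inf.mpr ⟨mem_stabilizer_iff.mpr hh1,
          mem_stabilizer_iff.mpr hh2⟩
        have hhmM : h * m ∈ M := mul_mem (hKM hhK) hmM
        have hrest : (h * m)⁻¹ * g ∈ K := by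
          refine Subgroup.mem_inf.mpr ⟨mem_stabilizer_iff.mpr ?_, mem_stabilizer_iff.mpr ?_⟩
          · rw [mul_smul, hgx₁, inv_smul_eq_iff, mul_smul, hm1, hh1]
          · rw [mul_smul, inv_smul_eq_iff, mul_smul, hh3]
        have hmem2 : (h * m) * ((h * m)⁻¹ * g) ∈ M := mul_mem hhmM (hKM hrest)
        have heq2 : (h * m) * ((h * m)⁻¹ * g) = g := by group
        rwa [heq2] at hmem2
    by_cases hc : G₁ ⊓ H₁ = K
    · -- fixed point route
      have hstabG₁y₁ : stabilizer G₁ y₁ = K.subgroupOf G₁ := by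
        ext ⟨g, hg⟩
        simp only [mem_stabilizer_iff, Subgroup.mk_smul, Subgroup.mem_subgroupOf]
        constructor
        · intro h
          rw [← hc]
          exact Subgroup.mem_inf.mpr ⟨hg, mem_stabilizer_iff.mpr h⟩
        · intro h
          rw [← hc] at h
          exact mem_stabilizer_iff.mp (Subgroup.mem_inf.mp h).2
      have horb1 : (orbit G₁ y₁).ncard = Nat.card Y - 1 := by
        have := index_stabilizer G₁ y₁
        rw [hstabG₁y₁] at this
        rw [← this]
        show K.relIndex G₁ = _
        rw [hKrelX, hXY]
      have hcompl : ((orbit G₁ y₁)ᶜ).ncard = 1 := by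
        have := Set.ncard_add_ncard_compl (orbit G₁ y₁)
        omega
      obtain ⟨y₀, hy₀⟩ := Set.ncard_eq_one.mp hcompl
      have hy₀mem : y₀ ∉ orbit G₁ y₁ := by
        have : y₀ ∈ ((orbit G₁ y₁)ᶜ : Set Y) := by rw [hy₀]; exact rfl
        exact this
      refine hfinal y₀ ?_
      intro g hg
      rw [mem_stabilizer_iff]
      have hnot : g • y₀ ∉ orbit G₁ y₁ := by
        intro hcon
        rw [mem_orbit_iff] at hcon
        obtain ⟨k, hk⟩ := hcon
        apply hy₀mem
        rw [mem_orbit_iff]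
        refine ⟨(⟨g, hg⟩ : G₁)⁻¹ * k, ?_⟩
        rw [mul_smul, hk]
        show (⟨g, hg⟩ : G₁)⁻¹ • (g • y₀) = y₀
        simp [Subgroup.smul_def]
      have : g • y₀ ∈ ((orbit G₁ y₁)ᶜ : Set Y) := hnot
      rw [hy₀] at this
      exact this
    · -- G₁ ≤ H₁ route
      have hKM : K ≤ G₁ ⊓ H₁ := le_inf hKG₁ hKH₁
      have hle : G₁ ≤ G₁ ⊓ H₁ := hmax (G₁ ⊓ H₁) hKM inf_le_left hc
      exact hfinal y₁ (hle.trans inf_le_right)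
  · -- small case : |X| = 2
    have hX2 : Nat.card X = 2 := by omega
    have hall : ∀ x : X, x = x₁ ∨ x = x₂ := by
      intro x
      by_contra hcon
      push_neg at hcon
      obtain ⟨h1, h2⟩ := hcon
      have hsub : ({x₁, x₂, x} : Finset X).card = 3 := by
        rw [Finset.card_insert_of_notMem (by simp [hx, Ne.symm h1]),
          Finset.card_insert_of_notMem (by simp [Ne.symm h2]), Finset.card_singleton]
      have := Finset.card_le_univ ({x₁, x₂, x} : Finset X)
      rw [hsub, ← Nat.card_eq_fintype_card] at this
      omega
    have hstabx : stabilizer G x₁ = ⊥ := by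
      ext g
      simp only [Subgroup.mem_bot, mem_stabilizer_iff]
      constructor
      · intro hg
        have hg2 : g • x₂ = x₂ := by
          rcases hall (g • x₂) with h | h
          · exfalso
            rw [← hg] at h
            exact hx (smul_left_cancel g h).symm
          · exact h
        apply eq_of_smul_eq_smul (α := X)
        intro x
        rcases hall x with rfl | rfl
        · rw [hg, one_smul]
        · rw [hg2, one_smul]
      · rintro rfl; exact one_smul _ _
    obtain ⟨g0, hg01, -⟩ := h2t y₁ y₂ y₂ y₁ hy (Ne.symm hy)
    have hg0ne : g0 ≠ 1 := by
      intro hcon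
      rw [hcon, one_smul] at hg01
      exact hy hg01
    have hg0x : g0 • x₁ = x₂ := by
      rcases hall (g0 • x₁) with h | h
      · exfalso
        apply hg0ne
        have : g0 ∈ stabilizer G x₁ := mem_stabilizer_iff.mpr h
        rwa [hstabx, Subgroup.mem_bot] at this
      · exact h
    have hTX : ∀ x x' : X, ∃ g : G, g • x = x' := by
      intro x x'
      rcases hall x with rfl | rfl <;> rcases hall x' with rfl | rfl
      · exact ⟨1, one_smul _ _⟩
      · exact ⟨g0, hg0x⟩
      · exact ⟨g0⁻¹, by rw [inv_smul_eq_iff, hg0x]⟩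
      · exact ⟨1, one_smul _ _⟩
    haveI instX : IsPretransitive G X := ⟨hTX⟩
    have hG2 : Nat.card G = 2 := by
      have h1 := index_stabilizer_of_transitive G x₁
      rw [hstabx, Subgroup.index_bot] at h1
      omega
    have hstaby : stabilizer G y₁ = ⊥ := by
      rw [← Subgroup.card_eq_one]
      have h1 := Subgroup.card_mul_index (stabilizer G y₁)
      rw [index_stabilizer_of_transitive G y₁, hG2] at h1
      have := Nat.card_pos (α := stabilizer G y₁)
      nlinarith
    exact exists_equiv_of_stabilizer_eq' x₁ y₁ (fun x => hTX x₁ x) (fun z => hTY y₁ z)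
      (by rw [hstabx, hstaby])
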